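/- Let N ≥ 4 and let σ ∈ GL(N, F_2) have even order. Then the order of σ is at most 2^(N-1) - 2. -/

import Mathlib

open Polynomial

section Aux

/-- Product bound: for a nonempty finset with all degrees ≥ 1,
`∏ (2^d_i - 1) + 1 ≤ 2^(∑ d_i)`. -/
private lemma aux_prod_le {ι : Type*} (S : Finset ι) (d : ι → ℕ)
    (hd : ∀ i ∈ S, 1 ≤ d i) (hS : S.Nonempty) :
    (∏ i ∈ S, (2 ^ d i - 1)) + 1 ≤ 2 ^ (∑ i ∈ S, d i) := by
  classical
  induction S using Finset.cons_induction with
  | empty => exact absurd hS (by simp)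
  | cons a s ha ih =>
    rw [Finset.prod_cons, Finset.sum_cons, pow_add]
    have ha2 : 1 ≤ 2 ^ d a := Nat.one_le_two_pow
    rcases s.eq_empty_or_nonempty with rfl | hs
    · simp only [Finset.prod_empty, Finset.sum_empty, pow_zero, mul_one]
      omega
    · have ihs := ih (fun i hi => hd i (Finset.mem_cons_of_mem hi)) hs
      set P := ∏ i ∈ s, (2 ^ d i - 1)
      set D := 2 ^ (∑ i ∈ s, d i)
      obtain ⟨x, hx⟩ : ∃ x, 2 ^ d a = x + 1 := ⟨2 ^ d a - 1, by omega⟩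
      rw [hx]
      have h1 : 1 ≤ D := Nat.one_le_two_pow
      have h2 : x * P ≤ x * D := Nat.mul_le_mul_left x (by omega)
      rw [Nat.add_sub_cancel]
      calc x * P + 1 ≤ x * D + D := by omega
        _ ≤ (x + 1) * D := by ring_nf; omega

private lemma aux_t_le {t : ℕ} (ht : 1 ≤ t) : t ≤ 2 ^ (t - 1) := by
  have : t - 1 < 2 ^ (t - 1) := Nat.lt_two_pow_self
  omega

private lemma aux_N_le {N : ℕ} (hN : 4 ≤ N) : 2 * N ≤ 2 ^ (N - 1) := by
  induction N with
  | zero => omega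
  | succ n ih =>
    rcases Nat.lt_or_ge n 4 with h | h
    · interval_cases n <;> simp_all <;> omega
    · have hn := ih (by omega)
      have h1 : 2 ^ (n - 1) ≥ 8 := by
        calc (8 : ℕ) = 2 ^ 3 := by norm_num
          _ ≤ 2 ^ (n - 1) := Nat.pow_le_pow_right (by norm_num) (by omega)
      have : n + 1 - 1 = (n - 1) + 1 := by omega
      rw [this, pow_succ]
      omega

/-- The combinatorial heart of the bound. -/
private lemma aux_comb {ι : Type*} [DecidableEq ι] (S : Finset ι) (d c : ι → ℕ) (N t : ℕ)
    (hN : 4 ≤ N)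
    (hd : ∀ i ∈ S, 1 ≤ d i) (hc : ∀ i ∈ S, 1 ≤ c i)
    (j : ι) (hj : j ∈ S) (hcj2 : 2 ≤ c j)
    (ht1 : 2 ^ (t - 1) < c j) (ht : 1 ≤ t)
    (hsum : ∑ i ∈ S, c i * d i ≤ N) :
    2 ^ t * ∏ i ∈ S, (2 ^ d i - 1) ≤ 2 ^ (N - 1) - 2 := by
  have hdj : 1 ≤ d j := hd j hj
  -- key degree inequality
  have hkey : (∑ i ∈ S, d i) + (c j - 1) * d j ≤ N := by
    have h1 : ∑ i ∈ S.erase j, d i ≤ ∑ i ∈ S.erase j, c i * d i :=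
      Finset.sum_le_sum fun i hi =>
        Nat.le_mul_of_pos_left _ (hc i (Finset.mem_of_mem_erase hi))
    have h2 : (∑ i ∈ S.erase j, c i * d i) + c j * d j = ∑ i ∈ S, c i * d i :=
      Finset.sum_erase_add S _ hj
    have h3 : (∑ i ∈ S.erase j, d i) + d j = ∑ i ∈ S, d i :=
      Finset.sum_erase_add S _ hj
    have h4 : c j * d j = d j + (c j - 1) * d j := by
      conv_lhs => rw [show c j = (c j - 1) + 1 from by omega]
      ring
    omega
  have h2t : 2 ≤ 2 ^ t := by
    calc (2:ℕ) = 2 ^ 1 := (pow_one 2).symm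
      _ ≤ 2 ^ t := Nat.pow_le_pow_right (by norm_num) ht
  have htt : t ≤ 2 ^ (t - 1) := aux_t_le ht
  have h2tt : 2 ^ t = 2 * 2 ^ (t - 1) := by
    conv_lhs => rw [show t = 1 + (t - 1) by omega]
    rw [pow_add, pow_one]
  have hb1 : (1:ℕ) ≤ 2 ^ (t - 1) := Nat.one_le_two_pow
  have hNpow : 2 * N ≤ 2 ^ (N - 1) := aux_N_le hN
  rcases Nat.lt_or_ge (d j) 2 with hdj1 | hdj2
  · -- d j = 1
    have hdj1 : d j = 1 := by omega
    rw [hdj1, mul_one] at hkey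
    have hprod : ∏ i ∈ S, (2 ^ d i - 1) = ∏ i ∈ S.erase j, (2 ^ d i - 1) := by
      rw [← Finset.prod_erase_mul S _ hj, hdj1]
      norm_num
    rcases (S.erase j).eq_empty_or_nonempty with he | he
    · -- S = {j}
      rw [hprod, he, Finset.prod_empty, mul_one]
      have hsS : ∑ i ∈ S, d i = d j := by
        rw [← Finset.sum_erase_add S _ hj, he, Finset.sum_empty, zero_add]
      have hcjN : c j ≤ N := by
        rw [hsS, hdj1] at hkey
        omega
      have he1 : 2 ^ t = 2 * 2 ^ (t - 1) := by
        conv_lhs => rw [show t = 1 + (t - 1) by omega]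
        rw [pow_add, pow_one]
      rw [he1]
      have he2 : 2 * 2 ^ (t - 1) ≤ 2 * (N - 1) := by omega
      omega
    · -- erase nonempty
      have hP := aux_prod_le (S.erase j) d
        (fun i hi => hd i (Finset.mem_of_mem_erase hi)) he
      set D' := ∑ i ∈ S.erase j, d i with hD'
      have hD'le : D' + c j ≤ N := by
        have h3 : D' + d j = ∑ i ∈ S, d i := Finset.sum_erase_add S _ hj
        rw [hdj1] at h3
        omega
      have hTD : t + D' ≤ N - 1 := by omega
      have hmul : 2 ^ t * ((∏ i ∈ S.erase j, (2 ^ d i - 1)) + 1) ≤ 2 ^ (t + D') := by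
        rw [pow_add]
        exact Nat.mul_le_mul_left _ hP
      have hle : 2 ^ (t + D') ≤ 2 ^ (N - 1) := Nat.pow_le_pow_right (by norm_num) hTD
      rw [hprod]
      have hexp : 2 ^ t * ((∏ i ∈ S.erase j, (2 ^ d i - 1)) + 1)
          = 2 ^ t * (∏ i ∈ S.erase j, (2 ^ d i - 1)) + 2 ^ t := by ring
      omega
  · -- d j ≥ 2
    have hP := aux_prod_le S d hd ⟨j, hj⟩
    set D := ∑ i ∈ S, d i with hD
    have hDle : D + 2 ^ t ≤ N := by
      have hm : 2 ^ (t - 1) * 2 ≤ (c j - 1) * d j :=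
        Nat.mul_le_mul (by omega) hdj2
      omega
    have hTD : t + D ≤ N - 1 := by omega
    have hmul : 2 ^ t * ((∏ i ∈ S, (2 ^ d i - 1)) + 1) ≤ 2 ^ (t + D) := by
      rw [pow_add]
      exact Nat.mul_le_mul_left _ hP
    have hle : 2 ^ (t + D) ≤ 2 ^ (N - 1) := Nat.pow_le_pow_right (by norm_num) hTD
    have hexp : 2 ^ t * ((∏ i ∈ S, (2 ^ d i - 1)) + 1)
        = 2 ^ t * (∏ i ∈ S, (2 ^ d i - 1)) + 2 ^ t := by ring
    omega

/-- `X^a - 1 ∣ X^b - 1` when `a ∣ b`. -/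
private lemma aux_X_pow_dvd {a b : ℕ} (h : a ∣ b) :
    (X ^ a - 1 : (ZMod 2)[X]) ∣ X ^ b - 1 := by
  obtain ⟨c, rfl⟩ := h
  rw [pow_mul]
  simpa using sub_dvd_pow_sub_pow (X ^ a : (ZMod 2)[X]) 1 c

/-- A monic irreducible polynomial over `F₂` not equal to `X` divides `X^(2^d - 1) - 1`. -/
private lemma aux_irred_dvd (r : (ZMod 2)[X]) (hr : Irreducible r) (hX : ¬ (X ∣ r)) :
    r ∣ X ^ (2 ^ r.natDegree - 1) - 1 := by
  haveI : Fact (Irreducible r) := ⟨hr⟩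
  have hr0 : r ≠ 0 := hr.ne_zero
  have hmonic : ∃ u : (ZMod 2)[X], IsUnit u ∧ (u * r).Monic := by
    refine ⟨C r.leadingCoeff⁻¹, ?_, ?_⟩
    · exact isUnit_C.mpr (IsUnit.inv (Ne.isUnit (leadingCoeff_ne_zero.mpr hr0)))
    · have : r.leadingCoeff ≠ 0 := leadingCoeff_ne_zero.mpr hr0
      rw [Polynomial.Monic, Polynomial.leadingCoeff_mul, Polynomial.leadingCoeff_C]
      field_simp
  -- every unit in ZMod 2 is 1, so r is monic
  have hrmonic : r.Monic := by
    have : r.leadingCoeff ≠ 0 := leadingCoeff_ne_zero.mpr hr0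
    have hall : ∀ x : ZMod 2, x ≠ 0 → x = 1 := by decide
    exact hall _ this
  letI : Fintype (AdjoinRoot r) := Module.fintypeOfFintype (AdjoinRoot.powerBasisAux' hrmonic)
  have hcard : Fintype.card (AdjoinRoot r) = 2 ^ r.natDegree := by
    rw [Module.card_fintype (AdjoinRoot.powerBasisAux' hrmonic)]
    simp [ZMod.card]
  have hroot : (AdjoinRoot.root r) ≠ 0 := by
    intro h0
    apply hX
    rw [← AdjoinRoot.mk_X] at h0
    have hrX : r ∣ X := AdjoinRoot.mk_eq_zero.mp h0
    exact ((hr.associated_of_dvd Polynomial.irreducible_X hrX).symm).dvd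
  have := FiniteField.pow_card_sub_one_eq_one (AdjoinRoot.root r) hroot
  rw [hcard] at this
  rw [← AdjoinRoot.mk_eq_zero]
  have : (aeval (AdjoinRoot.root r)) (X ^ (2 ^ r.natDegree - 1) - 1 : (ZMod 2)[X]) = 0 := by
    simp [this]
  rwa [AdjoinRoot.aeval_eq] at this

end Aux

theorem even_order_bound_GL (N : ℕ) (hN : 4 ≤ N) (σ : GL (Fin N) (ZMod 2))
    (h : Even (orderOf σ)) :
    orderOf σ ≤ 2 ^ (N - 1) - 2 := by
  classical
  set M : Matrix (Fin N) (Fin N) (ZMod 2) := (σ : Matrix (Fin N) (Fin N) (ZMod 2)) with hM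
  have hint : IsIntegral (ZMod 2) M := IsIntegral.of_finite _ _
  set p := minpoly (ZMod 2) M with hp
  have hpmonic : p.Monic := minpoly.monic hint
  have hpne : p ≠ 0 := hpmonic.ne_zero
  -- X does not divide p
  have hXp : ¬ (X ∣ p) := by
    rintro ⟨q, hq⟩
    have hq0 : q ≠ 0 := by rintro rfl; simp at hq; exact hpne hq
    have haev : aeval M p = 0 := minpoly.aeval _ _
    rw [hq, map_mul, aeval_X] at haev
    have haq : aeval M q = 0 := by
      calc aeval M q = 1 * aeval M q := (one_mul _).symm
        _ = (↑σ⁻¹ * M) * aeval M q := by rw [hM, Units.inv_mul]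
        _ = ↑σ⁻¹ * (M * aeval M q) := mul_assoc _ _ _
        _ = 0 := by rw [haev, mul_zero]
    have hdeg : q.degree < p.degree := by
      rw [hq, mul_comm]
      exact Polynomial.degree_lt_degree_mul_X hq0
    exact absurd (minpoly.degree_le_of_ne_zero (ZMod 2) M hq0 haq) (not_le.mpr hdeg)
  -- set up factorization data
  set F := UniqueFactorizationMonoid.normalizedFactors p with hF
  set S := F.toFinset with hS
  have hassoc : Associated F.prod p := UniqueFactorizationMonoid.prod_normalizedFactors hpne
  have hirr : ∀ r ∈ S, Irreducible r := fun r hr =>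
    UniqueFactorizationMonoid.irreducible_of_normalized_factor r (Multiset.mem_toFinset.mp hr)
  have hrdvdp : ∀ r ∈ S, r ∣ p := fun r hr =>
    UniqueFactorizationMonoid.dvd_of_mem_normalizedFactors (Multiset.mem_toFinset.mp hr)
  have hrne0 : ∀ r ∈ S, r ≠ 0 := fun r hr => (hirr r hr).ne_zero
  have hdpos : ∀ r ∈ S, 1 ≤ r.natDegree := fun r hr =>
    (hirr r hr).natDegree_pos
  have hcpos : ∀ r ∈ S, 1 ≤ F.count r := fun r hr =>
    Multiset.count_pos.mpr (Multiset.mem_toFinset.mp hr)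
  have hXr : ∀ r ∈ S, ¬ (X ∣ r) := fun r hr hx => hXp (hx.trans (hrdvdp r hr))
  -- p divides the product of prime powers
  have hpprod : p ∣ ∏ r ∈ S, r ^ F.count r := by
    rw [← Finset.prod_multiset_count]
    exact hassoc.symm.dvd
  have hprodp : (∏ r ∈ S, r ^ F.count r) ∣ p := by
    rw [← Finset.prod_multiset_count]
    exact hassoc.dvd
  -- degree bound
  have hdegsum : ∑ r ∈ S, F.count r * r.natDegree ≤ N := by
    have hchar : p ∣ M.charpoly := Matrix.minpoly_dvd_charpoly M
    have hcharne : M.charpoly ≠ 0 := (Matrix.charpoly_monic M).ne_zero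
    have h1 : (∏ r ∈ S, r ^ F.count r).natDegree ≤ M.charpoly.natDegree :=
      Polynomial.natDegree_le_of_dvd (hprodp.trans hchar) hcharne
    rw [Polynomial.natDegree_prod _ _ (fun r hr => pow_ne_zero _ (hrne0 r hr))] at h1
    simp only [Polynomial.natDegree_pow] at h1
    rwa [Matrix.charpoly_natDegree_eq_dim, Fintype.card_fin] at h1
  -- L: the odd exponent
  set L := ∏ r ∈ S, (2 ^ r.natDegree - 1) with hL
  have hLodd : Odd L := by
    refine Finset.prod_induction _ Odd (fun a b => Odd.mul) odd_one ?_
    intro r hr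
    have h1 : 2 ≤ 2 ^ r.natDegree := by
      calc (2:ℕ) = 2 ^ 1 := (pow_one 2).symm
        _ ≤ 2 ^ r.natDegree := Nat.pow_le_pow_right (by norm_num) (hdpos r hr)
    have : Even (2 ^ r.natDegree) := by
      rw [show r.natDegree = (r.natDegree - 1) + 1 by have := hdpos r hr; omega, pow_succ]
      exact (even_two).mul_left _
    rcases this with ⟨k, hk⟩
    exact ⟨k - 1, by omega⟩
  have hLpos : 0 < L :=
    Finset.prod_pos fun r hr => by
      have : 2 ≤ 2 ^ r.natDegree := by
        calc (2:ℕ) = 2 ^ 1 := (pow_one 2).symm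
          _ ≤ 2 ^ r.natDegree := Nat.pow_le_pow_right (by norm_num) (hdpos r hr)
      omega
  -- radical divides X^L - 1
  have hrad : (∏ r ∈ S, r) ∣ (X ^ L - 1 : (ZMod 2)[X]) := by
    apply Finset.prod_dvd_of_coprime
    · intro a ha b hb hab
      have hairr := hirr a ha
      have hbirr := hirr b hb
      refine hairr.coprime_iff_not_dvd.mpr fun hdvd => hab ?_
      have hassoc' := hairr.associated_of_dvd hbirr hdvd
      have hna : normalize a = a :=
        UniqueFactorizationMonoid.normalize_normalized_factor a (Multiset.mem_toFinset.mp ha)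
      have hnb : normalize b = b :=
        UniqueFactorizationMonoid.normalize_normalized_factor b (Multiset.mem_toFinset.mp hb)
      rw [← hna, ← hnb]
      exact normalize_eq_normalize hassoc'.dvd hassoc'.symm.dvd
    · intro r hr
      refine (aux_irred_dvd r (hirr r hr) (hXr r hr)).trans (aux_X_pow_dvd ?_)
      exact Finset.dvd_prod_of_mem _ hr
  -- helper: p ∣ X^n - 1 → σ^n = 1
  have hdvd_pow : ∀ n : ℕ, p ∣ (X ^ n - 1 : (ZMod 2)[X]) → σ ^ n = 1 := by
    intro n hdvd
    obtain ⟨q, hq⟩ := hdvd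
    have haev : aeval M ((X : (ZMod 2)[X]) ^ n - 1) = 0 := by
      rw [hq, map_mul, minpoly.aeval, zero_mul]
    rw [map_sub, map_one, map_pow, aeval_X, sub_eq_zero] at haev
    apply Units.ext
    rw [Units.val_pow_eq_pow_val, Units.val_one]
    exact haev
  -- now case on whether some multiplicity is ≥ 2
  by_cases hsq : ∃ r ∈ S, 2 ≤ F.count r
  · obtain ⟨r₀, hr₀S, hr₀2⟩ := hsq
    have hSne : S.Nonempty := ⟨r₀, hr₀S⟩
    obtain ⟨j, hjS, hjmax⟩ := S.exists_max_image (fun r => F.count r) hSne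
    have hcj2 : 2 ≤ F.count j := le_trans hr₀2 (hjmax r₀ hr₀S)
    set t := Nat.clog 2 (F.count j) with htdef
    have ht2 : F.count j ≤ 2 ^ t := Nat.le_pow_clog (by norm_num) _
    have ht1 : 2 ^ (t - 1) < F.count j :=
      Nat.pow_pred_clog_lt_self (by norm_num) (by omega)
    have htpos : 1 ≤ t := by
      by_contra h0
      have : t = 0 := by omega
      rw [this] at ht2
      simp at ht2
      omega
    -- p divides X^(2^t * L) - 1
    have hkeydvd : p ∣ (X ^ (2 ^ t * L) - 1 : (ZMod 2)[X]) := by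
      have h1 : p ∣ (∏ r ∈ S, r) ^ 2 ^ t := by
        refine hpprod.trans ?_
        rw [← Finset.prod_pow]
        exact Finset.prod_dvd_prod_of_dvd _ _ fun r hr =>
          pow_dvd_pow r (le_trans (hjmax r hr) ht2)
      have h2 : ((∏ r ∈ S, r) ^ 2 ^ t : (ZMod 2)[X]) ∣ (X ^ L - 1) ^ 2 ^ t :=
        pow_dvd_pow_of_dvd hrad _
      have h3 : ((X ^ L - 1 : (ZMod 2)[X])) ^ 2 ^ t = X ^ (2 ^ t * L) - 1 := by
        have := sub_pow_char_pow (R := (ZMod 2)[X]) (p := 2) (n := t)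
          (x := (X : (ZMod 2)[X]) ^ L) (y := 1)
        rw [this, one_pow, ← pow_mul, mul_comm L (2 ^ t)]
      rw [← h3]
      exact h1.trans h2
    have hσpow : σ ^ (2 ^ t * L) = 1 := hdvd_pow _ hkeydvd
    have hord : orderOf σ ≤ 2 ^ t * L :=
      orderOf_le_of_pow_eq_one (by positivity) hσpow
    refine hord.trans ?_
    exact aux_comb S (fun r => r.natDegree) (fun r => F.count r) N t hN
      hdpos hcpos j hjS hcj2 ht1 htpos hdegsum
  · -- all multiplicities are 1: order divides odd L, contradiction with evenness
    push_neg at hsq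
    exfalso
    have hcnt1 : ∀ r ∈ S, F.count r = 1 := fun r hr => by
      have := hcpos r hr; have := hsq r hr; omega
    have hpdvd : p ∣ (X ^ L - 1 : (ZMod 2)[X]) := by
      have heq : (∏ r ∈ S, r ^ F.count r) = ∏ r ∈ S, r :=
        Finset.prod_congr rfl fun r hr => by rw [hcnt1 r hr, pow_one]
      rw [heq] at hpprod
      exact hpprod.trans hrad
    have hdvdL : orderOf σ ∣ L := orderOf_dvd_of_pow_eq_one (hdvd_pow L hpdvd)
    have h2 : 2 ∣ orderOf σ := even_iff_two_dvd.mp h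
    have h2L : 2 ∣ L := h2.trans hdvdL
    exact (Nat.not_even_iff_odd.mpr hLodd) (even_iff_two_dvd.mpr h2L)
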